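/- arXiv:1107.1419 — 2 statements merged into one kernel-verified Lean document; each statement's English description precedes it below -/
import Mathlib

section
/- If U ⊂ ℝ² ≅ ℂ is a bounded simply connected domain and T : {|z| < 1} → U is a biholomorphism, then the sets U_n := T({|z| < 1 − 1/n}) are open, and U_n converges to U in the Hausdorff sense of open sets (equivalently, the complements in a large closed ball converge in Hausdorff distance), and the closures of U_n converge to the closure of U in Hausdorff distance. -/
open Metric Filter

/-- If `U ⊆ ℂ` is a bounded simply connected domain and `T` a biholomorphism from the unit
disk onto `U`, then the sets `Uₙ := T({|z| < 1 − 1/n})` are open, they converge to `U` in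
the Hausdorff sense of open sets (the complements in any large compact set `B ⊇ U`
converge in Hausdorff distance), and their closures converge to `closure U` in Hausdorff
distance. -/
theorem stmt_1 (U : Set ℂ) (hUopen : IsOpen U) (hUbdd : Bornology.IsBounded U)
    (hUne : U.Nonempty) (hUconn : IsConnected U) (hUsc : SimplyConnectedSpace U)
    (T : ℂ → ℂ) (hTdiff : DifferentiableOn ℂ T (ball 0 1))
    (hTinj : Set.InjOn T (ball 0 1)) (hTsurj : T '' ball 0 1 = U) :
    (∀ n : ℕ, IsOpen (T '' ball 0 (1 - 1 / (n + 1)))) ∧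
    (∀ B : Set ℂ, IsCompact B → U ⊆ B →
      Tendsto (fun n : ℕ => hausdorffDist (B \ T '' ball 0 (1 - 1 / (n + 1))) (B \ U))
        atTop (nhds 0)) ∧
    Tendsto (fun n : ℕ => hausdorffDist (closure (T '' ball 0 (1 - 1 / (n + 1))))
      (closure U)) atTop (nhds 0) := by
  set V : ℕ → Set ℂ := fun n => T '' ball 0 (1 - 1 / (n + 1)) with hV
  have hballs : ∀ n : ℕ, ball (0:ℂ) (1 - 1 / (n + 1)) ⊆ ball 0 1 := by
    intro n
    apply ball_subset_ball
    have : (0:ℝ) < 1 / (n+1) := by positivity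
    linarith
  have hVU : ∀ n, V n ⊆ U := fun n => hTsurj ▸ Set.image_mono (hballs n)
  have hmono : ∀ m n : ℕ, m ≤ n → V m ⊆ V n := by
    intro m n hmn
    apply Set.image_mono
    apply ball_subset_ball
    have h1 : ((m:ℝ)+1) ≤ (n:ℝ)+1 := by exact_mod_cast by omega
    have h2 : (1:ℝ)/(n+1) ≤ 1/(m+1) := by
      apply one_div_le_one_div_of_le (by positivity) h1
    linarith
  have hUnion : ∀ x ∈ U, ∃ n, x ∈ V n := by
    intro x hx
    rw [← hTsurj] at hx
    obtain ⟨z, hz, rfl⟩ := hx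
    rw [mem_ball_zero_iff] at hz
    obtain ⟨n, hn⟩ := exists_nat_one_div_lt (show (0:ℝ) < 1 - ‖z‖ by linarith)
    exact ⟨n, ⟨z, by rw [mem_ball_zero_iff]; linarith, rfl⟩⟩
  -- openness
  have hopen : ∀ n, IsOpen (V n) := by
    intro n
    have hA : AnalyticOnNhd ℂ T (ball 0 1) := hTdiff.analyticOnNhd isOpen_ball
    rcases hA.is_constant_or_isOpen (convex_ball (0:ℂ) 1).isPreconnected with h | h
    · -- constant contradicts injectivity
      obtain ⟨w, hw⟩ := h
      exfalso
      have h0 : (0:ℂ) ∈ ball (0:ℂ) 1 := by simp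
      have h2 : (1/2 : ℂ) ∈ ball (0:ℂ) 1 := by
        rw [mem_ball_zero_iff]; norm_num
      have := hTinj h0 h2 (by rw [hw _ h0, hw _ h2])
      norm_num at this
    · exact h _ (hballs n) isOpen_ball
  -- compact subsets of U are eventually inside V n
  have key : ∀ K : Set ℂ, IsCompact K → K ⊆ U → ∃ N, ∀ n ≥ N, K ⊆ V n := by
    intro K hK hKU
    obtain ⟨t, ht⟩ := hK.elim_finite_subcover V hopen
      (fun x hx => Set.mem_iUnion.mpr (hUnion x (hKU hx)))
    refine ⟨t.sup id, fun n hn x hx => ?_⟩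
    obtain ⟨i, hi, hxi⟩ := Set.mem_iUnion₂.mp (ht hx)
    exact hmono i n (le_trans (Finset.le_sup (f := id) hi) hn) hxi
  have hclU : IsCompact (closure U) :=
    Metric.isCompact_of_isClosed_isBounded isClosed_closure hUbdd.closure
  -- frontier nonempty
  have hfr : (frontier U).Nonempty := by
    by_contra h
    rw [Set.not_nonempty_iff_eq_empty] at h
    have := isClopen_iff_frontier_eq_empty.mpr h
    rcases isClopen_iff.mp this with h1 | h1
    · exact hUne.ne_empty h1
    · obtain ⟨R, hR⟩ := hUbdd.subset_closedBall 0
      have hmem : ((R+1 : ℝ) : ℂ) ∈ U := h1 ▸ Set.mem_univ _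
      have h2 := hR hmem
      rw [mem_closedBall_zero_iff, Complex.norm_real, Real.norm_eq_abs] at h2
      have hR0 : (0:ℝ) ≤ R := le_trans (abs_nonneg _) h2
      rw [abs_of_nonneg (by linarith)] at h2
      linarith
  refine ⟨hopen, ?_, ?_⟩
  · -- complements in B
    intro B hB hUB
    have hBU_ne : (B \ U).Nonempty := by
      obtain ⟨x, hx⟩ := hfr
      refine ⟨x, ?_, ?_⟩
      · exact hB.isClosed.closure_subset_iff.mpr hUB (frontier_subset_closure hx)
      · exact fun hxU => (hUopen.frontier_eq ▸ hx).2 hxU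
    rw [Metric.tendsto_atTop]
    intro ε hε
    set K : Set ℂ := closure U ∩ {x | ε/2 ≤ infDist x (B \ U)} with hK
    have hKcl : IsClosed K := isClosed_closure.inter
      (isClosed_le continuous_const (continuous_infDist_pt _))
    have hKU : K ⊆ U := by
      rintro x ⟨hx1, hx2⟩
      by_contra hxU
      have hxBU : x ∈ B \ U := ⟨hB.isClosed.closure_subset_iff.mpr hUB hx1, hxU⟩
      have h0 : infDist x (B \ U) = 0 := infDist_zero_of_mem hxBU
      simp only [Set.mem_setOf_eq] at hx2
      rw [h0] at hx2
      linarith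
    obtain ⟨N, hN⟩ := key K (hclU.of_isClosed_subset hKcl Set.inter_subset_left) hKU
    refine ⟨N, fun n hn => ?_⟩
    have hle : hausdorffDist (B \ V n) (B \ U) ≤ ε/2 := by
      apply hausdorffDist_le_of_mem_dist (by linarith)
      · intro x hx
        by_cases hxU : x ∈ U
        · have hxK : x ∉ K := fun hK => hx.2 (hN n hn hK)
          have : infDist x (B \ U) < ε/2 := by
            by_contra h
            push_neg at h
            exact hxK ⟨subset_closure hxU, h⟩
          obtain ⟨y, hy, hdy⟩ := (infDist_lt_iff hBU_ne).mp this
          exact ⟨y, hy, le_of_lt hdy⟩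
        · exact ⟨x, ⟨hx.1, hxU⟩, by rw [dist_self]; positivity⟩
      · intro x hx
        exact ⟨x, ⟨hx.1, fun h => hx.2 (hVU n h)⟩, by rw [dist_self]; positivity⟩
    rw [Real.dist_0_eq_abs, abs_of_nonneg hausdorffDist_nonneg]
    calc hausdorffDist (B \ V n) (B \ U) ≤ ε/2 := hle
    _ < ε := by linarith
  · -- closures
    rw [Metric.tendsto_atTop]
    intro ε hε
    have hcov : closure U ⊆ ⋃ y : U, ball (y:ℂ) (ε/2) := by
      intro x hx
      obtain ⟨y, hy, hdy⟩ := Metric.mem_closure_iff.mp hx (ε/2) (by linarith)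
      exact Set.mem_iUnion.mpr ⟨⟨y, hy⟩, mem_ball.mpr hdy⟩
    obtain ⟨t, ht⟩ := hclU.elim_finite_subcover (fun y : U => ball (y:ℂ) (ε/2))
      (fun y => isOpen_ball) hcov
    have hex : ∀ y : U, ∃ n, (y:ℂ) ∈ V n := fun y => hUnion y y.2
    choose g hg using hex
    refine ⟨t.sup g, fun n hn => ?_⟩
    have hle : hausdorffDist (closure (V n)) (closure U) ≤ ε/2 := by
      apply hausdorffDist_le_of_mem_dist (by linarith)
      · intro x hx
        exact ⟨x, closure_mono (hVU n) hx, by rw [dist_self]; positivity⟩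
      · intro x hx
        obtain ⟨y, hy, hxy⟩ := Set.mem_iUnion₂.mp (ht hx)
        refine ⟨y, subset_closure (hmono (g y) n (le_trans (Finset.le_sup hy) hn) (hg y)), ?_⟩
        exact le_of_lt (mem_ball.mp hxy)
    rw [Real.dist_0_eq_abs, abs_of_nonneg hausdorffDist_nonneg]
    calc hausdorffDist (closure (V n)) (closure U) ≤ ε/2 := hle
    _ < ε := by linarith
end

section
/- Hausdorff convergence of compact sets preserves bounds on the number of connected components: if (K_n) is a sequence of nonempty compact subsets of ℝ^N converging in Hausdorff distance to K, and each K_n has at most p connected components, then K has at most p connected components. In particular, Hausdorff limits of connected compact sets are connected. -/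
open MeasureTheory Metric EMetric Filter

lemma aux_dichotomy {X : Type*} [TopologicalSpace X] {F : Set X} (hF : F.Nonempty) :
    ∀ n : ℕ, (∃ f : Fin n → X, (∀ i, f i ∈ F) ∧ ∀ y ∈ F, ∃ i, y ∈ connectedComponentIn F (f i))
      ∨ (∃ y : Fin (n + 1) → X, (∀ i, y i ∈ F) ∧
          ∀ i j, i ≠ j → y j ∉ connectedComponentIn F (y i)) := by
  intro n
  induction n with
  | zero =>
    right
    exact ⟨fun _ => hF.choose, fun _ => hF.choose_spec, fun i j hij => absurd (Fin.ext (by omega)) hij⟩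
  | succ n ih =>
    rcases ih with ⟨f, hf, hcov⟩ | ⟨y, hy, hdis⟩
    · left
      refine ⟨fun i => if h : (i : ℕ) < n then f ⟨i, h⟩ else hF.choose, fun i => ?_, fun z hz => ?_⟩
      · by_cases h : (i : ℕ) < n
        · simp only [dif_pos h]; exact hf _
        · simp only [dif_neg h]; exact hF.choose_spec
      · obtain ⟨i, hi⟩ := hcov z hz
        refine ⟨⟨i, i.isLt.trans (Nat.lt_succ_self n)⟩, ?_⟩
        simpa only [dif_pos i.isLt] using hi
    · by_cases hcov : ∀ z ∈ F, ∃ i, z ∈ connectedComponentIn F (y i)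
      · exact Or.inl ⟨y, hy, hcov⟩
      · right
        push_neg at hcov
        obtain ⟨z, hzF, hz⟩ := hcov
        refine ⟨Fin.snoc y z, ?_, ?_⟩
        · intro i
          refine Fin.lastCases ?_ ?_ i
          · simpa using hzF
          · intro i; simpa using hy i
        · intro i j
          refine Fin.lastCases ?_ ?_ i
          · refine Fin.lastCases ?_ ?_ j
            · intro h; exact absurd rfl h
            · intro j' _
              simp only [Fin.snoc_last, Fin.snoc_castSucc]
              intro hmem
              exact hz j' (by rw [← connectedComponentIn_eq hmem]; exact mem_connectedComponentIn hzF)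
          · intro i'
            refine Fin.lastCases ?_ ?_ j
            · intro _
              simp only [Fin.snoc_last, Fin.snoc_castSucc]
              exact hz i'
            · intro j' hij'
              simp only [Fin.snoc_castSucc]
              exact hdis i' j' (fun h => hij' (by rw [h]))
open Set in
lemma aux_sep {E : Type*} [MetricSpace E] {F : Set E} (hF : IsCompact F) {m : ℕ}
    (y : Fin m → E) (hy : ∀ i, y i ∈ F)
    (hdis : ∀ i j, i ≠ j → y j ∉ connectedComponentIn F (y i)) :
    ∃ Fi : Fin m → Set E, (∀ i, IsCompact (Fi i)) ∧ (∀ i, (Fi i).Nonempty) ∧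
      (∀ i, Fi i ⊆ F) ∧ (∀ i j, i ≠ j → Disjoint (Fi i) (Fi j)) ∧
      (∀ i, IsCompact (F \ Fi i)) := by
  haveI : CompactSpace F := isCompact_iff_compactSpace.mp hF
  set yc : Fin m → F := fun i => ⟨y i, hy i⟩ with hyc
  have hne : ∀ i j, i ≠ j → yc j ∉ connectedComponent (yc i) := by
    intro i j hij hmem
    refine hdis i j hij ?_
    rw [connectedComponentIn_eq_image (hy i)]
    exact ⟨yc j, hmem, rfl⟩
  have key : ∀ i j : Fin m, i ≠ j → ∃ Z : Set F, IsClopen Z ∧ yc i ∈ Z ∧ yc j ∉ Z := by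
    intro i j hij
    have h := hne i j hij
    rw [connectedComponent_eq_iInter_isClopen, mem_iInter] at h
    push_neg at h
    obtain ⟨⟨Z, hZ, hiZ⟩, hjZ⟩ := h
    exact ⟨Z, hZ, hiZ, hjZ⟩
  choose Z hZclopen hZmem hZnmem using key
  classical
  set U : Fin m → Fin m → Set F := fun i j =>
    if h : i < j then Z i j h.ne else if h' : j < i then (Z j i h'.ne)ᶜ else univ with hU
  have hU1 : ∀ i j, IsClopen (U i j) := by
    intro i j
    simp only [hU]
    split_ifs with h h'
    · exact hZclopen _ _ _
    · exact (hZclopen _ _ _).compl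
    · exact isClopen_univ
  have hU2 : ∀ i j, yc i ∈ U i j := by
    intro i j
    simp only [hU]
    split_ifs with h h'
    · exact hZmem _ _ _
    · exact hZnmem _ _ _
    · trivial
  have hU3 : ∀ i j, i < j → Disjoint (U i j) (U j i) := by
    intro i j h
    have h1 : U i j = Z i j h.ne := dif_pos h
    have h2 : U j i = (Z i j h.ne)ᶜ := by
      simp only [hU]
      rw [dif_neg (asymm h), dif_pos h]
    rw [h1, h2]
    exact disjoint_compl_right
  set V : Fin m → Set F := fun i => ⋂ j, U i j with hV
  have hV1 : ∀ i, IsClopen (V i) := by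
    intro i
    have : V i = ⋂ j ∈ Finset.univ, U i j := by simp [hV]
    rw [this]
    exact isClopen_biInter_finset fun j _ => hU1 i j
  have hV2 : ∀ i, yc i ∈ V i := fun i => mem_iInter.mpr fun j => hU2 i j
  have hV3 : ∀ i j, i ≠ j → Disjoint (V i) (V j) := by
    intro i j hij
    rcases lt_or_gt_of_ne hij with h | h
    · exact (hU3 i j h).mono (iInter_subset _ j) (iInter_subset _ i)
    · exact ((hU3 j i h).mono (iInter_subset _ i) (iInter_subset _ j)).symm
  refine ⟨fun i => Subtype.val '' V i, ?_, ?_, ?_, ?_, ?_⟩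
  · exact fun i => ((hV1 i).isClosed.isCompact).image continuous_subtype_val
  · exact fun i => ⟨y i, yc i, hV2 i, rfl⟩
  · exact fun i => Subtype.coe_image_subset F (V i)
  · intro i j hij
    rw [Set.disjoint_image_iff Subtype.val_injective]
    exact hV3 i j hij
  · intro i
    have him : F \ Subtype.val '' V i = Subtype.val '' (V i)ᶜ := by
      ext x
      constructor
      · rintro ⟨hxF, hx⟩
        exact ⟨⟨x, hxF⟩, fun h => hx ⟨⟨x, hxF⟩, h, rfl⟩, rfl⟩
      · rintro ⟨xc, hxc, rfl⟩
        refine ⟨xc.2, ?_⟩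
        rintro ⟨xc', h', he⟩
        exact hxc (by rwa [Subtype.val_injective he] at h')
    rw [him]
    exact ((hV1 i).compl.isClosed.isCompact).image continuous_subtype_val


/-- Hausdorff convergence of compact sets preserves bounds on the number of connected
components: if each `K n` is a nonempty compact subset of ℝ^N with at most `p` connected
components (i.e. it is a union of `p` connected pieces) and `K n → K` in Hausdorff
distance with `K` compact and nonempty, then `K` has at most `p` connected components. -/
theorem stmt_4 (N p : ℕ) (K : ℕ → Set (EuclideanSpace ℝ (Fin N)))
    (Klim : Set (EuclideanSpace ℝ (Fin N)))
    (hcpt : ∀ n, IsCompact (K n)) (hne : ∀ n, (K n).Nonempty)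
    (hKlimcpt : IsCompact Klim) (hKlimne : Klim.Nonempty)
    (hconv : Tendsto (fun n => hausdorffDist (K n) Klim) atTop (nhds 0))
    (hcomp : ∀ n, ∃ A : Fin p → Set (EuclideanSpace ℝ (Fin N)),
      (∀ i, IsPreconnected (A i)) ∧ K n = ⋃ i, A i) :
    ∃ A : Fin p → Set (EuclideanSpace ℝ (Fin N)),
      (∀ i, IsPreconnected (A i)) ∧ Klim = ⋃ i, A i := by
  rcases aux_dichotomy hKlimne p with ⟨f, hfmem, hfcov⟩ | ⟨y, hy, hdis⟩
  · refine ⟨fun i => connectedComponentIn Klim (f i),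
      fun i => isPreconnected_connectedComponentIn, ?_⟩
    refine Set.Subset.antisymm (fun z hz => ?_) ?_
    · obtain ⟨i, hi⟩ := hfcov z hz
      exact Set.mem_iUnion.mpr ⟨i, hi⟩
    · exact Set.iUnion_subset fun i => connectedComponentIn_subset _ _
  · exfalso
    obtain ⟨Fi, hFcpt, hFne, hFsub, hFdisj, hGcpt⟩ := aux_sep hKlimcpt y hy hdis
    have hδi : ∀ i, ∃ δ, 0 < δ ∧
        Disjoint (thickening δ (Fi i)) (thickening δ (Klim \ Fi i)) := fun i =>
      Set.disjoint_sdiff_right.exists_thickenings (hFcpt i) (hGcpt i).isClosed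
    choose δ hδpos hδdisj using hδi
    have huniv : (Finset.univ : Finset (Fin (p + 1))).Nonempty := Finset.univ_nonempty
    set ε := Finset.univ.inf' huniv δ with hε
    have hεpos : 0 < ε := by
      rw [hε, Finset.lt_inf'_iff]
      exact fun i _ => hδpos i
    obtain ⟨n, hn⟩ := (hconv.eventually_lt_const hεpos).exists
    have hEdist : hausdorffEDist (K n) Klim ≠ ⊤ :=
      hausdorffEDist_ne_top_of_nonempty_of_bounded (hne n) hKlimne
        (hcpt n).isBounded hKlimcpt.isBounded
    have hKsub : K n ⊆ thickening ε Klim := by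
      intro x hx
      rw [mem_thickening_iff]
      have h1 : infDist x Klim ≤ hausdorffDist (K n) Klim :=
        infDist_le_hausdorffDist_of_mem hx hEdist
      exact (infDist_lt_iff hKlimne).mp (h1.trans_lt hn)
    have hbi : ∀ i, ∃ b ∈ K n, ∃ z ∈ Fi i, dist b z < ε := by
      intro i
      obtain ⟨z, hz⟩ := hFne i
      have h1 : infDist z (K n) ≤ hausdorffDist Klim (K n) :=
        infDist_le_hausdorffDist_of_mem (hFsub i hz) (by rwa [hausdorffEDist_comm] at hEdist)
      rw [hausdorffDist_comm] at h1
      obtain ⟨b, hbK, hb⟩ := (infDist_lt_iff (hne n)).mp (h1.trans_lt hn)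
      exact ⟨b, hbK, z, hz, by rwa [dist_comm] at hb⟩
    choose b hbK z hzF hdistbz using hbi
    obtain ⟨A, hAconn, hAeq⟩ := hcomp n
    have hσ : ∀ i, ∃ k : Fin p, b i ∈ A k := by
      intro i
      have h := hbK i
      rw [hAeq] at h
      exact Set.mem_iUnion.mp h
    choose σ hσmem using hσ
    obtain ⟨i, j, hij, hσij⟩ := Fintype.exists_ne_map_eq_of_card_lt σ (by simp)
    set s := A (σ i) with hs
    have hdisj : Disjoint (thickening ε (Fi i)) (thickening ε (Klim \ Fi i)) :=
      (hδdisj i).mono (thickening_mono (Finset.inf'_le _ (Finset.mem_univ i)) _)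
        (thickening_mono (Finset.inf'_le _ (Finset.mem_univ i)) _)
    have hsub : s ⊆ thickening ε (Fi i) ∪ thickening ε (Klim \ Fi i) := by
      intro x hx
      have hxK : x ∈ K n := by
        rw [hAeq]
        exact Set.mem_iUnion.mpr ⟨σ i, hx⟩
      obtain ⟨w, hw, hdw⟩ := mem_thickening_iff.mp (hKsub hxK)
      by_cases hwF : w ∈ Fi i
      · exact Or.inl (mem_thickening_iff.mpr ⟨w, hwF, hdw⟩)
      · exact Or.inr (mem_thickening_iff.mpr ⟨w, ⟨hw, hwF⟩, hdw⟩)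
    have hbi_mem : b i ∈ s ∩ thickening ε (Fi i) :=
      ⟨hσmem i, mem_thickening_iff.mpr ⟨z i, hzF i, hdistbz i⟩⟩
    have hbj_mem : b j ∈ s ∩ thickening ε (Klim \ Fi i) := by
      refine ⟨by rw [hs, hσij]; exact hσmem j, mem_thickening_iff.mpr ⟨z j, ⟨hFsub j (hzF j), ?_⟩, hdistbz j⟩⟩
      intro hmem
      exact (hFdisj j i hij.symm).le_bot ⟨hzF j, hmem⟩
    obtain ⟨w, hw⟩ := hAconn (σ i) _ _ isOpen_thickening isOpen_thickening hsub
      ⟨b i, hbi_mem⟩ ⟨b j, hbj_mem⟩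
    exact hdisj.le_bot hw.2
end
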